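/- Let n ≥ 1 and let γ = (τ, s) be a type D clan on 2n positions that avoids the pattern (1,2,1,2). Then u(γ) is a type D element of S_{2n}: it is a signed element and #{i ∈ {1,…,n} : u(γ)(i) > n} is even. -/

import Mathlib

/-- For a type D clan `γ = (τ, s)` on `2n` positions (a skew-symmetric
`(n,n)`-clan with `τ i ≠ i.rev` for all `i` and with
`#{i ≤ n : τ i = i ∧ s i = -1} + #{i : i < τ i ≤ n}` even) avoiding the pattern
`(1,2,1,2)`, the permutation `u(γ)` is a type D element of `S_{2n}`:
it is a signed element and `#{i ∈ {1,…,n} : u(γ)(i) > n}` is even.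
(Positions/values are modeled zero-based by `Fin (2*n)`: "`i ≤ n`" becomes
`(i : ℕ) < n` and "value `> n`" becomes `n ≤ (π i : ℕ)`.) -/
theorem stmt_3 (n : ℕ) (hn : 1 ≤ n)
    (τ : Equiv.Perm (Fin (2 * n))) (s : Fin (2 * n) → ℤ)
    -- τ is an involution
    (hinv : ∀ i, τ (τ i) = i)
    -- signs of fixed points are ±1
    (hsgn : ∀ i, τ i = i → s i = 1 ∨ s i = -1)
    -- (n,n)-clan: #(plus fixed points) - #(minus fixed points) = n - n = 0
    (hbal : (Finset.univ.filter (fun i => τ i = i ∧ s i = 1)).card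
          = (Finset.univ.filter (fun i => τ i = i ∧ s i = -1)).card)
    -- skew-symmetry
    (hskew₁ : ∀ i, τ i.rev = (τ i).rev)
    (hskew₂ : ∀ i, τ i = i → τ i.rev = i.rev ∧ s i.rev = - s i)
    -- type D conditions
    (hD₁ : ∀ i : Fin (2 * n), τ i ≠ i.rev)
    (hD₂ : Even ((Finset.univ.filter (fun i : Fin (2 * n) =>
              (i : ℕ) < n ∧ τ i = i ∧ s i = -1)).card
          + (Finset.univ.filter (fun i : Fin (2 * n) =>
              i < τ i ∧ (τ i : ℕ) < n)).card))
    -- γ avoids the pattern (1,2,1,2)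
    (havoid : ¬ ∃ i j k l : Fin (2 * n), i < j ∧ j < k ∧ k < l ∧ τ i = k ∧ τ j = l)
    -- π = u(γ)
    (π : Equiv.Perm (Fin (2 * n)))
    (hπmem : ∀ i, ((τ i = i ∧ s i = 1) ∨ τ i < i) ↔ (π i : ℕ) < n)
    (hπdecA : ∀ i j : Fin (2 * n), ((τ i = i ∧ s i = 1) ∨ τ i < i) →
        ((τ j = j ∧ s j = 1) ∨ τ j < j) → i < j → π j < π i)
    (hπdecB : ∀ i j : Fin (2 * n), ¬ ((τ i = i ∧ s i = 1) ∨ τ i < i) →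
        ¬ ((τ j = j ∧ s j = 1) ∨ τ j < j) → i < j → π j < π i) :
    (∀ k : Fin (2 * n), π k.rev = (π k).rev) ∧
    Even (Finset.univ.filter (fun i : Fin (2 * n) =>
        (i : ℕ) < n ∧ n ≤ (π i : ℕ))).card := by
  set P : Fin (2 * n) → Prop := fun i => (τ i = i ∧ s i = 1) ∨ τ i < i with hPdef
  have hPd : ∀ i, P i ↔ ((τ i = i ∧ s i = 1) ∨ τ i < i) := fun i => Iff.rfl
  classical
  -- basic rev facts
  have hrevval : ∀ i : Fin (2 * n), (i.rev : ℕ) = 2 * n - 1 - i := by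
    intro i; rw [Fin.val_rev]; omega
  have hrevlt : ∀ i j : Fin (2 * n), i.rev < j ↔ j.rev < i := by
    intro i j
    rw [Fin.lt_def, Fin.lt_def, hrevval, hrevval]
    have := i.isLt; have := j.isLt; omega
  -- complementarity under rev
  have hrevP : ∀ i, P i → ¬ P i.rev := by
    intro i hi hir
    rcases hi with ⟨hfix, hs⟩ | hlt
    · obtain ⟨hfr, hsr⟩ := hskew₂ i hfix
      rcases hir with ⟨_, hs1⟩ | hlt'
      · rw [hsr, hs] at hs1; norm_num at hs1
      · rw [hfr] at hlt'; exact lt_irrefl _ hlt'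
    · have h1 : τ i.rev = (τ i).rev := hskew₁ i
      have h2 : i.rev < τ i.rev := by
        rw [h1, Fin.lt_def, hrevval, hrevval]
        have := Fin.lt_def.mp hlt
        have := i.isLt; have := (τ i).isLt; omega
      rcases hir with ⟨hfix, _⟩ | hlt'
      · exact absurd hfix (ne_of_lt h2).symm
      · exact absurd hlt' (not_lt.mpr (le_of_lt h2))
  have hrevN : ∀ i, ¬ P i → P i.rev := by
    intro i hi
    have h1 : ¬ (τ i = i ∧ s i = 1) := fun h => hi (Or.inl h)
    have h2 : ¬ τ i < i := fun h => hi (Or.inr h)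
    rcases lt_trichotomy (τ i) i with h | h | h
    · exact absurd h h2
    · have hs : s i = -1 := by
        rcases hsgn i h with h1' | h1'
        · exact absurd ⟨h, h1'⟩ h1
        · exact h1'
      obtain ⟨hfr, hsr⟩ := hskew₂ i h
      exact Or.inl ⟨hfr, by rw [hsr, hs]; norm_num⟩
    · refine Or.inr ?_
      rw [hskew₁ i, Fin.lt_def, hrevval, hrevval]
      have := Fin.lt_def.mp h
      have := i.isLt; have := (τ i).isLt; omega
  -- value formulas
  have hvalA : ∀ i, P i → (π i : ℕ)
      = (Finset.univ.filter (fun j => P j ∧ i < j)).card := by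
    intro i hi
    rw [← Fin.card_Iio (π i)]
    symm
    apply Finset.card_bij (fun j _ => π j)
    · intro j hj
      simp only [Finset.mem_filter, Finset.mem_univ, true_and] at hj
      exact Finset.mem_Iio.mpr (hπdecA i j hi hj.1 hj.2)
    · intro a _ b _ hab; exact π.injective hab
    · intro v hv
      rw [Finset.mem_Iio] at hv
      refine ⟨π.symm v, ?_, by simp⟩
      have hvn : (v : ℕ) < n := lt_of_lt_of_le (Fin.lt_def.mp hv) (le_of_lt ((hπmem i).mp hi))
      have hPv : P (π.symm v) := (hπmem _).mpr (by simpa using hvn)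
      simp only [Finset.mem_filter, Finset.mem_univ, true_and]
      refine ⟨hPv, ?_⟩
      rcases lt_trichotomy i (π.symm v) with h | h | h
      · exact h
      · exact absurd (h ▸ hv) (by simp)
      · have := hπdecA _ _ hPv hi h
        simp at this
        exact absurd hv (not_lt.mpr (le_of_lt this))
  have hvalB : ∀ i, ¬ P i → (π i : ℕ)
      = n + (Finset.univ.filter (fun j => ¬ P j ∧ i < j)).card := by
    intro i hi
    have hni : n ≤ (π i : ℕ) := not_lt.mp (fun h => hi ((hπmem i).mpr h))
    have hcard : (Finset.Ico (⟨n, by omega⟩ : Fin (2 * n)) (π i)).card = (π i : ℕ) - n := by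
      rw [Fin.card_Ico]
    have : (Finset.univ.filter (fun j => ¬ P j ∧ i < j)).card
        = (Finset.Ico (⟨n, by omega⟩ : Fin (2 * n)) (π i)).card := by
      apply Finset.card_bij (fun j _ => π j)
      · intro j hj
        simp only [Finset.mem_filter, Finset.mem_univ, true_and] at hj
        rw [Finset.mem_Ico]
        refine ⟨?_, hπdecB i j hi hj.1 hj.2⟩
        exact Fin.le_def.mpr (not_lt.mp (fun h => hj.1 ((hπmem j).mpr h)))
      · intro a _ b _ hab; exact π.injective hab
      · intro v hv
        rw [Finset.mem_Ico] at hv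
        refine ⟨π.symm v, ?_, by simp⟩
        have hPv : ¬ P (π.symm v) := fun h => by
          have := (hπmem _).mp h
          simp only [Equiv.apply_symm_apply] at this
          exact absurd (Fin.le_def.mp hv.1) (not_le.mpr this)
        simp only [Finset.mem_filter, Finset.mem_univ, true_and]
        refine ⟨hPv, ?_⟩
        rcases lt_trichotomy i (π.symm v) with h | h | h
        · exact h
        · exact absurd (h ▸ hv.2) (by simp)
        · have := hπdecB _ _ hPv hi h
          simp at this
          exact absurd hv.2 (not_lt.mpr (le_of_lt this))
    omega
  -- cardinality of A is n
  have hrevbij : (Finset.univ.filter (fun j => P j)).card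
      = (Finset.univ.filter (fun j => ¬ P j)).card := by
    apply Finset.card_bij (fun j _ => j.rev)
    · intro j hj
      simp only [Finset.mem_filter, Finset.mem_univ, true_and] at hj ⊢
      exact hrevP j hj
    · intro a _ b _ hab; exact Fin.rev_injective hab
    · intro j hj
      simp only [Finset.mem_filter, Finset.mem_univ, true_and] at hj
      refine ⟨j.rev, ?_, Fin.rev_rev j⟩
      simp only [Finset.mem_filter, Finset.mem_univ, true_and]
      exact hrevN _ (by simpa using hj)
  have hcardtot : (Finset.univ.filter (fun j => P j)).card
      + (Finset.univ.filter (fun j => ¬ P j)).card = 2 * n := by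
    rw [Finset.card_filter_add_card_filter_not]
    simp [Fintype.card_fin]
  have hcardA : (Finset.univ.filter (fun j => P j)).card = n := by omega
  have hcardB : (Finset.univ.filter (fun j => ¬ P j)).card = n := by omega
  have hsplitgen : ∀ (Q : Fin (2 * n) → Prop) (_ : DecidablePred Q) (k : Fin (2 * n)), Q k →
      (Finset.univ.filter (fun j => Q j ∧ j < k)).card
      + (Finset.univ.filter (fun j => Q j ∧ k < j)).card + 1
      = (Finset.univ.filter (fun j => Q j)).card := by
    intro Q _ k hk
    have hdisj : Disjoint (Finset.univ.filter (fun j => Q j ∧ j < k))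
        (Finset.univ.filter (fun j => Q j ∧ k < j)) := by
      rw [Finset.disjoint_filter]
      intro j _ hj1 hj2
      exact absurd hj2.2 (not_lt.mpr (le_of_lt hj1.2))
    have hunion : (Finset.univ.filter (fun j => Q j ∧ j < k))
        ∪ (Finset.univ.filter (fun j => Q j ∧ k < j))
        = (Finset.univ.filter (fun j => Q j)).erase k := by
      ext j
      simp only [Finset.mem_union, Finset.mem_filter, Finset.mem_univ, true_and,
        Finset.mem_erase]
      constructor
      · rintro (⟨h1, h2⟩ | ⟨h1, h2⟩)
        · exact ⟨ne_of_lt h2, h1⟩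
        · exact ⟨(ne_of_lt h2).symm, h1⟩
      · rintro ⟨hne, h1⟩
        rcases lt_or_gt_of_ne hne with h | h
        · exact Or.inl ⟨h1, h⟩
        · exact Or.inr ⟨h1, h⟩
    have hu := Finset.card_union_of_disjoint hdisj
    rw [hunion] at hu
    have hkmem : k ∈ Finset.univ.filter (fun j => Q j) := by
      simp only [Finset.mem_filter, Finset.mem_univ, true_and]; exact hk
    have he := Finset.card_erase_of_mem hkmem
    have hpos : 1 ≤ (Finset.univ.filter (fun j => Q j)).card :=
      Finset.card_pos.mpr ⟨k, hkmem⟩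
    omega
  have hsplitA : ∀ k : Fin (2 * n), P k →
      (Finset.univ.filter (fun j => P j ∧ j < k)).card
      + (Finset.univ.filter (fun j => P j ∧ k < j)).card + 1 = n := by
    intro k hk
    have h := hsplitgen P (by infer_instance) k hk
    rw [hcardA] at h
    convert h using 3 <;> simp
  have hsplitB : ∀ k : Fin (2 * n), ¬ P k →
      (Finset.univ.filter (fun j => ¬ P j ∧ j < k)).card
      + (Finset.univ.filter (fun j => ¬ P j ∧ k < j)).card + 1 = n := by
    intro k hk
    have h := hsplitgen (fun j => ¬ P j) (by infer_instance) k hk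
    rw [hcardB] at h
    convert h using 3 <;> simp
  -- rev transfers counts
  have hrevcount : ∀ k : Fin (2 * n),
      (Finset.univ.filter (fun j => ¬ P j ∧ k.rev < j)).card
      = (Finset.univ.filter (fun j => P j ∧ j < k)).card := by
    intro k
    apply Finset.card_bij (fun j _ => j.rev)
    · intro j hj
      simp only [Finset.mem_filter, Finset.mem_univ, true_and] at hj ⊢
      refine ⟨hrevN j hj.1, ?_⟩
      have h2 := Fin.lt_def.mp hj.2
      rw [hrevval] at h2
      rw [Fin.lt_def, hrevval]
      have := j.isLt; have := k.isLt; omega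
    · intro a _ b _ hab; exact Fin.rev_injective hab
    · intro j hj
      simp only [Finset.mem_filter, Finset.mem_univ, true_and] at hj
      refine ⟨j.rev, ?_, Fin.rev_rev j⟩
      simp only [Finset.mem_filter, Finset.mem_univ, true_and]
      refine ⟨hrevP j hj.1, ?_⟩
      have h2 := Fin.lt_def.mp hj.2
      rw [Fin.lt_def, hrevval, hrevval]
      have := j.isLt; have := k.isLt; omega
  have hrevcount2 : ∀ k : Fin (2 * n),
      (Finset.univ.filter (fun j => P j ∧ k.rev < j)).card
      = (Finset.univ.filter (fun j => ¬ P j ∧ j < k)).card := by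
    intro k
    apply Finset.card_bij (fun j _ => j.rev)
    · intro j hj
      simp only [Finset.mem_filter, Finset.mem_univ, true_and] at hj ⊢
      refine ⟨hrevP j hj.1, ?_⟩
      have h2 := Fin.lt_def.mp hj.2
      rw [hrevval] at h2
      rw [Fin.lt_def, hrevval]
      have := j.isLt; have := k.isLt; omega
    · intro a _ b _ hab; exact Fin.rev_injective hab
    · intro j hj
      simp only [Finset.mem_filter, Finset.mem_univ, true_and] at hj
      refine ⟨j.rev, ?_, Fin.rev_rev j⟩
      simp only [Finset.mem_filter, Finset.mem_univ, true_and]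
      refine ⟨hrevN j hj.1, ?_⟩
      have h2 := Fin.lt_def.mp hj.2
      rw [Fin.lt_def, hrevval, hrevval]
      have := j.isLt; have := k.isLt; omega
  -- Part 1: signedness
  have part1 : ∀ k : Fin (2 * n), π k.rev = (π k).rev := by
    intro k
    apply Fin.ext
    rw [hrevval (π k)]
    by_cases hk : P k
    · have hnk : ¬ P k.rev := hrevP k hk
      rw [hvalB _ hnk, hrevcount k, hvalA _ hk]
      have := hsplitA k hk
      omega
    · have hnk : P k.rev := hrevN k hk
      rw [hvalA _ hnk, hrevcount2 k, hvalB _ hk]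
      have := hsplitB k hk
      omega
  refine ⟨part1, ?_⟩
  -- Part 2: parity
  -- crossing arcs set
  set C : Finset (Fin (2 * n)) :=
    Finset.univ.filter (fun i => (i : ℕ) < n ∧ n ≤ (τ i : ℕ)) with hCdef
  have hCmem : ∀ i, i ∈ C ↔ ((i : ℕ) < n ∧ n ≤ (τ i : ℕ)) := by
    intro i; simp [hCdef]
  have hfC : ∀ i ∈ C, (τ i).rev ∈ C := by
    intro i hi
    rw [hCmem] at hi ⊢
    constructor
    · rw [hrevval]; have := (τ i).isLt; omega
    · have : τ (τ i).rev = i.rev := by rw [hskew₁, hinv]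
      rw [this, hrevval]; have := i.isLt; omega
  have hff : ∀ i : Fin (2 * n), (τ ((τ i).rev)).rev = i := by
    intro i; rw [hskew₁, hinv, Fin.rev_rev]
  have hfne : ∀ i : Fin (2 * n), (τ i).rev ≠ i := by
    intro i h
    apply hD₁ i
    rw [← Fin.rev_rev (τ i), h]
  have hCeven : Even C.card := by
    have hsplitC : C = C.filter (fun i => i < (τ i).rev) ∪ C.filter (fun i => (τ i).rev < i) := by
      ext i
      simp only [Finset.mem_union, Finset.mem_filter]
      constructor
      · intro hi
        rcases lt_trichotomy i ((τ i).rev) with h | h | h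
        · exact Or.inl ⟨hi, h⟩
        · exact absurd h.symm (hfne i)
        · exact Or.inr ⟨hi, h⟩
      · rintro (⟨h, _⟩ | ⟨h, _⟩) <;> exact h
    have hdisj : Disjoint (C.filter (fun i => i < (τ i).rev)) (C.filter (fun i => (τ i).rev < i)) := by
      rw [Finset.disjoint_filter]
      intro i _ h1 h2
      exact absurd h2 (not_lt.mpr (le_of_lt h1))
    have hbijC : (C.filter (fun i => i < (τ i).rev)).card
        = (C.filter (fun i => (τ i).rev < i)).card := by
      apply Finset.card_bij (fun i _ => (τ i).rev)
      · intro i hi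
        simp only [Finset.mem_filter] at hi ⊢
        refine ⟨hfC i hi.1, ?_⟩
        rw [hff]
        exact hi.2
      · intro a ha b hb hab
        have : (τ ((τ a).rev)).rev = (τ ((τ b).rev)).rev := by rw [hab]
        rwa [hff, hff] at this
      · intro j hj
        simp only [Finset.mem_filter] at hj
        refine ⟨(τ j).rev, ?_, hff j⟩
        simp only [Finset.mem_filter]
        exact ⟨hfC j hj.1, by rw [hff]; exact hj.2⟩
    rw [hsplitC, Finset.card_union_of_disjoint hdisj, hbijC]
    exact ⟨_, rfl⟩
  -- identify the target filter
  have hNPiff : ∀ i, ¬ P i ↔ ((τ i = i ∧ s i = -1) ∨ i < τ i) := by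
    intro i
    constructor
    · intro hi
      rcases lt_trichotomy (τ i) i with h | h | h
      · exact absurd (Or.inr h) hi
      · rcases hsgn i h with h1 | h1
        · exact absurd (Or.inl ⟨h, h1⟩) hi
        · exact Or.inl ⟨h, h1⟩
      · exact Or.inr h
    · rintro (⟨h1, h2⟩ | h) hP
      · rcases hP with ⟨_, h3⟩ | h3
        · rw [h2] at h3; norm_num at h3
        · exact absurd h1 (ne_of_lt h3)
      · rcases hP with ⟨h1, _⟩ | h1
        · exact absurd h1 (ne_of_lt h).symm
        · exact absurd h (not_lt.mpr (le_of_lt h1))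
  have htarget : Finset.univ.filter (fun i : Fin (2 * n) => (i : ℕ) < n ∧ n ≤ (π i : ℕ))
      = Finset.univ.filter (fun i : Fin (2 * n) => (i : ℕ) < n ∧ τ i = i ∧ s i = -1)
      ∪ Finset.univ.filter (fun i : Fin (2 * n) => i < τ i ∧ (τ i : ℕ) < n)
      ∪ C := by
    ext i
    simp only [Finset.mem_union, Finset.mem_filter, Finset.mem_univ, true_and, hCmem]
    constructor
    · rintro ⟨h1, h2⟩
      have hnp : ¬ P i := fun h => absurd ((hπmem i).mp h) (not_lt.mpr h2)
      rcases (hNPiff i).mp hnp with ⟨h3, h4⟩ | h3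
      · exact Or.inl (Or.inl ⟨h1, h3, h4⟩)
      · rcases lt_or_ge ((τ i : ℕ)) n with h5 | h5
        · exact Or.inl (Or.inr ⟨h3, h5⟩)
        · exact Or.inr ⟨h1, h5⟩
    · intro h
      have hin : (i : ℕ) < n ∧ ¬ P i := by
        rcases h with (⟨h1, h2, h3⟩ | ⟨h1, h2⟩) | ⟨h1, h2⟩
        · exact ⟨h1, (hNPiff i).mpr (Or.inl ⟨h2, h3⟩)⟩
        · exact ⟨by have := Fin.lt_def.mp h1; omega, (hNPiff i).mpr (Or.inr h1)⟩
        · refine ⟨h1, (hNPiff i).mpr (Or.inr ?_)⟩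
          rw [Fin.lt_def]; omega
      exact ⟨hin.1, not_lt.mp (fun h' => hin.2 ((hπmem i).mpr h'))⟩
  rw [htarget]
  have hd1 : Disjoint (Finset.univ.filter (fun i : Fin (2 * n) => (i : ℕ) < n ∧ τ i = i ∧ s i = -1))
      (Finset.univ.filter (fun i : Fin (2 * n) => i < τ i ∧ (τ i : ℕ) < n)) := by
    rw [Finset.disjoint_left]
    intro i h1 h2
    simp only [Finset.mem_filter, Finset.mem_univ, true_and] at h1 h2
    exact absurd h1.2.1 (ne_of_lt h2.1).symm
  have hd2 : Disjoint (Finset.univ.filter (fun i : Fin (2 * n) => (i : ℕ) < n ∧ τ i = i ∧ s i = -1)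
      ∪ Finset.univ.filter (fun i : Fin (2 * n) => i < τ i ∧ (τ i : ℕ) < n)) C := by
    rw [Finset.disjoint_left]
    intro i h1 h2
    rw [hCmem] at h2
    simp only [Finset.mem_union, Finset.mem_filter, Finset.mem_univ, true_and] at h1
    rcases h1 with ⟨_, h3, _⟩ | ⟨_, h3⟩
    · omega
    · omega
  rw [Finset.card_union_of_disjoint hd2, Finset.card_union_of_disjoint hd1]
  exact Even.add hD₂ hCeven
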